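/- Let R be an almost Dedekind domain and I a nonzero integral ideal of R. Then ν_I : Max(R) → ℤ is continuous (inverse topology, discrete ℤ) if and only if I = J₁ ⋯ J_k for some radical ideals J₁ ⊆ ⋯ ⊆ J_k each of which has continuous ν_{J_i}, if and only if I is a finite product of radical ideals with continuous associated maps. -/

import Mathlib

def AlmostDedekind (R : Type*) [CommRing R] [IsDomain R] : Prop :=
  ∀ M : MaximalSpectrum R, IsDiscreteValuationRing (Localization.AtPrime M.asIdeal)

/-- The inverse topology on the maximal spectrum. -/
def invTop (R : Type*) [CommRing R] : TopologicalSpace (MaximalSpectrum R) :=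
  .generateFrom {s | ∃ I : Ideal R, I.FG ∧ s = {M | I ≤ M.asIdeal}}

namespace Stmt13Aux

variable {R : Type*} [CommRing R] [IsDomain R]

local notation "Loc" M => Localization.AtPrime (MaximalSpectrum.asIdeal M)

noncomputable def lmap (M : MaximalSpectrum R) : R →+* Localization.AtPrime M.asIdeal :=
  algebraMap R (Localization.AtPrime M.asIdeal)

lemma lmap_injective (M : MaximalSpectrum R) : Function.Injective (lmap M) :=
  IsLocalization.injective _ M.asIdeal.primeCompl_le_nonZeroDivisors

lemma mem_map_iff (M : MaximalSpectrum R) {J : Ideal R} {z : Localization.AtPrime M.asIdeal} :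
    z ∈ J.map (lmap M) ↔ ∃ (a : R) (s : M.asIdeal.primeCompl), a ∈ J ∧ z * lmap M s = lmap M a := by
  rw [lmap, IsLocalization.mem_map_algebraMap_iff M.asIdeal.primeCompl]
  constructor
  · rintro ⟨⟨a, s⟩, h⟩
    exact ⟨a, s, a.2, h⟩
  · rintro ⟨a, s, ha, h⟩
    exact ⟨⟨⟨a, ha⟩, s⟩, h⟩

/-- Local-to-global containment. -/
lemma le_of_map_le_map {J K : Ideal R}
    (h : ∀ M : MaximalSpectrum R, J.map (lmap M) ≤ K.map (lmap M)) : J ≤ K := by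
  intro x hx
  by_contra hxK
  -- the ideal of elements r with r * x ∈ K
  set C : Ideal R := Submodule.colon K (Submodule.span R {x}) with hC
  have hCne : C ≠ ⊤ := by
    intro htop
    have : (1 : R) ∈ C := htop ▸ trivial
    rw [hC, Submodule.mem_colon_span_singleton, one_smul] at this
    exact hxK this
  obtain ⟨N, hNmax, hCN⟩ := Ideal.exists_le_maximal C hCne
  set M : MaximalSpectrum R := ⟨N, hNmax⟩
  have hz : lmap M x ∈ K.map (lmap M) := h M (Ideal.mem_map_of_mem _ hx)
  rw [mem_map_iff] at hz
  obtain ⟨a, s, haK, hza⟩ := hz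
  rw [← map_mul] at hza
  have : x * (s : R) = a := lmap_injective M hza
  have hsC : (s : R) ∈ C := by
    rw [hC, Submodule.mem_colon_span_singleton, smul_eq_mul, mul_comm]
    rw [this]; exact haK
  exact s.2 (hCN hsC)

lemma map_ne_bot {J : Ideal R} (hJ : J ≠ ⊥) (M : MaximalSpectrum R) :
    J.map (lmap M) ≠ ⊥ := by
  obtain ⟨x, hxJ, hx0⟩ := Submodule.exists_mem_ne_zero_of_ne_bot hJ
  intro hbot
  have : lmap M x ∈ (⊥ : Ideal _) := hbot ▸ Ideal.mem_map_of_mem _ hxJ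
  rw [Ideal.mem_bot] at this
  exact hx0 (lmap_injective M (by simpa using this))

end Stmt13Aux

namespace Stmt13Aux

variable {R : Type*} [CommRing R] [IsDomain R]

section DVR

variable {A : Type*} [CommRing A] [IsDomain A] [IsDiscreteValuationRing A]

open IsLocalRing

lemma dvr_pow_le_pow_iff {a b : ℕ} :
    maximalIdeal A ^ a ≤ maximalIdeal A ^ b ↔ b ≤ a := by
  obtain ⟨ϖ, hϖ⟩ := IsDiscreteValuationRing.exists_irreducible A
  rw [hϖ.maximalIdeal_eq, Ideal.span_singleton_pow, Ideal.span_singleton_pow,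
    Ideal.span_singleton_le_span_singleton]
  exact pow_dvd_pow_iff hϖ.ne_zero hϖ.not_isUnit

lemma dvr_ideal_eq_pow {s : Ideal A} (hs : s ≠ ⊥) :
    ∃ n : ℕ, s = maximalIdeal A ^ n := by
  obtain ⟨ϖ, hϖ⟩ := IsDiscreteValuationRing.exists_irreducible A
  obtain ⟨n, hn⟩ := IsDiscreteValuationRing.ideal_eq_span_pow_irreducible hs hϖ
  exact ⟨n, by rw [hn, hϖ.maximalIdeal_eq, Ideal.span_singleton_pow]⟩

end DVR

section AD

variable (hR : ∀ M : MaximalSpectrum R, IsDiscreteValuationRing (Localization.AtPrime M.asIdeal))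
include hR

open IsLocalRing

lemma map_max_eq (M : MaximalSpectrum R) :
    M.asIdeal.map (lmap M) = maximalIdeal (Localization.AtPrime M.asIdeal) :=
  Localization.AtPrime.map_eq_maximalIdeal

omit hR in
lemma map_top_of_ne {M N : MaximalSpectrum R} (hMN : M ≠ N) :
    M.asIdeal.map (lmap N) = ⊤ := by
  have : ¬ M.asIdeal ≤ N.asIdeal := by
    intro hle
    exact hMN (MaximalSpectrum.ext (M.isMaximal.eq_of_le N.isMaximal.ne_top hle))
  obtain ⟨t, htM, htN⟩ := Set.not_subset.mp this
  have hunit : IsUnit (lmap N t) := IsLocalization.map_units _ (⟨t, htN⟩ : N.asIdeal.primeCompl)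
  exact Ideal.eq_top_of_isUnit_mem _ (Ideal.mem_map_of_mem _ htM) hunit

/-- Global containment in a power of a maximal ideal is a local condition. -/
lemma le_pow_iff_map_le {J : Ideal R} {M : MaximalSpectrum R} {n : ℕ} :
    J ≤ M.asIdeal ^ n ↔ J.map (lmap M) ≤ maximalIdeal (Localization.AtPrime M.asIdeal) ^ n := by
  constructor
  · intro h
    calc J.map (lmap M) ≤ (M.asIdeal ^ n).map (lmap M) := Ideal.map_mono h
    _ = (M.asIdeal.map (lmap M)) ^ n := Ideal.map_pow _ _ _
    _ = _ := by rw [map_max_eq hR]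
  · intro h
    apply le_of_map_le_map
    intro N
    rcases eq_or_ne N M with rfl | hne
    · rwa [Ideal.map_pow, map_max_eq hR]
    · rw [Ideal.map_pow, map_top_of_ne (Ne.symm hne), Ideal.top_pow]
      exact le_top

lemma map_eq_pow_exp {J : Ideal R} {M : MaximalSpectrum R} {a : ℕ} (hJ : J ≠ ⊥)
    (h1 : J ≤ M.asIdeal ^ a) (h2 : ¬ J ≤ M.asIdeal ^ (a + 1)) :
    J.map (lmap M) = maximalIdeal (Localization.AtPrime M.asIdeal) ^ a := by
  haveI := hR M
  obtain ⟨c, hc⟩ := dvr_ideal_eq_pow (map_ne_bot hJ M)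
  have hca : c = a := by
    by_contra hne
    rcases Nat.lt_or_ge c a with hlt | hge
    · -- J ≤ M^a gives map J ≤ m^a, i.e. m^c ≤ m^a, so a ≤ c
      have := (le_pow_iff_map_le hR).mp h1
      rw [hc] at this
      exact absurd (dvr_pow_le_pow_iff.mp this) (Nat.not_le.mpr hlt)
    · have hge' : a + 1 ≤ c := Nat.lt_of_le_of_ne hge (Ne.symm hne)
      apply h2
      rw [le_pow_iff_map_le hR, hc]
      exact dvr_pow_le_pow_iff.mpr hge'
  rw [hc, hca]

omit hR in
/-- Exponents are unique. -/
lemma exp_unique {J : Ideal R} {M : MaximalSpectrum R} {a b : ℕ}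
    (h1 : J ≤ M.asIdeal ^ a) (h2 : ¬ J ≤ M.asIdeal ^ (a + 1))
    (h3 : J ≤ M.asIdeal ^ b) (h4 : ¬ J ≤ M.asIdeal ^ (b + 1)) : a = b := by
  by_contra hne
  rcases Nat.lt_or_ge a b with hlt | hge
  · exact h2 (h3.trans (Ideal.pow_le_pow_right hlt))
  · have : b + 1 ≤ a := Nat.lt_of_le_of_ne hge fun h => hne h.symm
    exact h4 (h1.trans (Ideal.pow_le_pow_right this))

lemma exp_mul {J K : Ideal R} {M : MaximalSpectrum R} {a b : ℕ}
    (hJ : J ≠ ⊥) (hK : K ≠ ⊥)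
    (hJ1 : J ≤ M.asIdeal ^ a) (hJ2 : ¬ J ≤ M.asIdeal ^ (a + 1))
    (hK1 : K ≤ M.asIdeal ^ b) (hK2 : ¬ K ≤ M.asIdeal ^ (b + 1)) :
    J * K ≤ M.asIdeal ^ (a + b) ∧ ¬ J * K ≤ M.asIdeal ^ (a + b + 1) := by
  haveI := hR M
  have hmap : (J * K).map (lmap M) = maximalIdeal (Localization.AtPrime M.asIdeal) ^ (a + b) := by
    rw [Ideal.map_mul, map_eq_pow_exp hR hJ hJ1 hJ2, map_eq_pow_exp hR hK hK1 hK2, pow_add]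
  constructor
  · rw [le_pow_iff_map_le hR, hmap]
  · rw [le_pow_iff_map_le hR, hmap]
    intro h
    have := dvr_pow_le_pow_iff.mp h
    omega

end AD

end Stmt13Aux

namespace Stmt13Aux

variable {R : Type*} [CommRing R] [IsDomain R]

open IsLocalRing

lemma map_isRadical {J : Ideal R} (hJ : J.IsRadical) (M : MaximalSpectrum R) :
    (J.map (lmap M)).IsRadical := by
  intro z hz
  obtain ⟨n, hzn⟩ := hz
  rcases Nat.eq_zero_or_pos n with rfl | hn
  · rw [pow_zero] at hzn
    exact (Ideal.eq_top_of_isUnit_mem _ hzn isUnit_one) ▸ Submodule.mem_top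
  -- write z = a / s
  obtain ⟨⟨a, s⟩, hs⟩ := IsLocalization.surj M.asIdeal.primeCompl z
  -- z^n ∈ map J : get a witness
  have hs' : z * lmap M (s : R) = lmap M a := hs
  have hzn' : z ^ n * lmap M ((s : R) ^ n) ∈ J.map (lmap M) := by
    exact Ideal.mul_mem_right _ _ hzn
  rw [map_pow, ← mul_pow, hs', ← map_pow] at hzn'
  rw [mem_map_iff] at hzn'
  obtain ⟨c, t, hcJ, hct⟩ := hzn'
  rw [← map_mul] at hct
  have heq : a ^ n * (t : R) = c := lmap_injective M hct
  obtain ⟨k, rfl⟩ : ∃ k, n = k + 1 := ⟨n - 1, by omega⟩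
  have hatJ : a * t ∈ J := by
    apply hJ
    refine ⟨k + 1, ?_⟩
    have h5 : (a * (t : R)) ^ (k + 1) = a ^ (k + 1) * (t : R) * (t : R) ^ k := by ring
    rw [h5, heq]
    exact Ideal.mul_mem_right _ _ hcJ
  -- z * (s t) = a t
  rw [mem_map_iff]
  exact ⟨a * t, s * t, hatJ, by
    rw [Submonoid.coe_mul, map_mul, map_mul, ← mul_assoc, hs']⟩

lemma exp_of_radical
    (hR : ∀ M : MaximalSpectrum R, IsDiscreteValuationRing (Localization.AtPrime M.asIdeal))
    {J : Ideal R} {M : MaximalSpectrum R} (hJ : J ≠ ⊥) (hrad : J.IsRadical) :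
    ¬ J ≤ M.asIdeal ^ 2 := by
  haveI := hR M
  intro hle
  obtain ⟨c, hc⟩ := dvr_ideal_eq_pow (map_ne_bot hJ M)
  have h2c : 2 ≤ c := by
    have := (le_pow_iff_map_le hR).mp hle
    rw [hc] at this
    exact dvr_pow_le_pow_iff.mp this
  set m := maximalIdeal (Localization.AtPrime M.asIdeal) with hm
  have hradm : (m ^ c).IsRadical := by
    rw [← hc]; exact map_isRadical hrad M
  have h1 : (m ^ c).radical = m ^ c := hradm.radical
  have h2 : (m ^ c).radical = m.radical := Ideal.radical_pow m (by omega : c ≠ 0)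
  have h3 : m.radical = m := ((maximalIdeal.isMaximal _).isPrime.isRadical).radical
  have hme : m = m ^ c := by
    conv_lhs => rw [← h3, ← h2]
    exact h1
  have : m ^ 1 ≤ m ^ 2 := by
    calc m ^ 1 = m ^ c := by rw [pow_one]; exact hme
    _ ≤ m ^ 2 := dvr_pow_le_pow_iff.mpr h2c
  have := dvr_pow_le_pow_iff.mp this
  omega

lemma prime_nonzero_maximal
    (hR : ∀ M : MaximalSpectrum R, IsDiscreteValuationRing (Localization.AtPrime M.asIdeal))
    {P : Ideal R} (hP : P.IsPrime) (h0 : P ≠ ⊥) : P.IsMaximal := by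
  obtain ⟨N, hNmax, hPN⟩ := Ideal.exists_le_maximal P hP.ne_top
  set M : MaximalSpectrum R := ⟨N, hNmax⟩
  haveI := hR M
  -- map P is a nonzero ideal of the DVR contained in the maximal ideal
  obtain ⟨c, hc⟩ := dvr_ideal_eq_pow (map_ne_bot h0 M)
  suffices hNP : N ≤ P by
    rwa [show P = N from le_antisymm hPN hNP]
  intro y hy
  have hyc : lmap M (y ^ c) ∈ P.map (lmap M) := by
    rw [hc, map_pow]
    exact Ideal.pow_mem_pow (by
      rw [← map_max_eq hR M]
      exact Ideal.mem_map_of_mem _ hy) c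
  rw [mem_map_iff] at hyc
  obtain ⟨a, s, haP, hsa⟩ := hyc
  rw [← map_mul] at hsa
  have : y ^ c * (s : R) = a := lmap_injective M hsa
  have hycP : y ^ c * (s : R) ∈ P := this ▸ haP
  rcases hP.mem_or_mem hycP with h | h
  · exact hP.mem_of_pow_mem _ h
  · exact absurd (hPN h) s.2

end Stmt13Aux

namespace Stmt13Aux

variable {R : Type*} [CommRing R] [IsDomain R]

lemma top_fg : (⊤ : Ideal R).FG := ⟨{1}, by simp [Ideal.span_singleton_one]⟩

lemma multiset_prod_fg {ι : Type*} (B : ι → Ideal R) (hB : ∀ β, (B β).FG) (s : Multiset ι) :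
    ((s.map B).prod).FG := by
  induction s using Multiset.induction with
  | empty => simpa using top_fg
  | cons a s ih =>
      rw [Multiset.map_cons, Multiset.prod_cons]
      exact Submodule.FG.mul (hB a) ih

lemma chain_le_of_fg {c : Set (Ideal R)} (hc : IsChain (· ≤ ·) c) {y : Ideal R} (hy : y ∈ c)
    {J : Ideal R} (hJ : J.FG) (h : J ≤ sSup c) : ∃ z ∈ c, J ≤ z := by
  classical
  have hne : c.Nonempty := ⟨y, hy⟩
  have hdir : DirectedOn (· ≤ ·) c := hc.directedOn
  obtain ⟨fs, hfs⟩ := hJ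
  have key : ∀ fs' : Finset R, (∀ g ∈ fs', (g : R) ∈ sSup c) → ∃ z ∈ c, ∀ g ∈ fs', g ∈ z := by
    intro fs'
    induction fs' using Finset.induction with
    | empty => exact fun _ => ⟨y, hy, by simp⟩
    | @insert g fs' hg ih =>
        intro hmem
        obtain ⟨z1, hz1c, hz1⟩ := ih fun x hx => hmem x (Finset.mem_insert_of_mem hx)
        obtain ⟨z2, hz2c, hgz2⟩ := (Submodule.mem_sSup_of_directed hne hdir).mp
          (hmem g (Finset.mem_insert_self _ _))
        rcases eq_or_ne z1 z2 with rfl | hz12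
        · exact ⟨z1, hz1c, fun x hx => by
            rcases Finset.mem_insert.mp hx with rfl | hx
            exacts [hgz2, hz1 x hx]⟩
        rcases hc hz1c hz2c hz12 with h12 | h21
        · exact ⟨z2, hz2c, fun x hx => by
            rcases Finset.mem_insert.mp hx with rfl | hx
            exacts [hgz2, h12 (hz1 x hx)]⟩
        · exact ⟨z1, hz1c, fun x hx => by
            rcases Finset.mem_insert.mp hx with rfl | hx
            exacts [h21 hgz2, hz1 x hx]⟩
  obtain ⟨z, hzc, hz⟩ := key fs fun g hg => h (hfs ▸ Ideal.subset_span hg)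
  exact ⟨z, hzc, by rw [← hfs]; exact Ideal.span_le.mpr fun g hg => hz g hg⟩

lemma exists_finite_subcover
    (hR : ∀ M : MaximalSpectrum R, IsDiscreteValuationRing (Localization.AtPrime M.asIdeal))
    {I : Ideal R} (hI : I ≠ ⊥) {ι : Type*} (B : ι → Ideal R) (hB : ∀ β, (B β).FG)
    (hcov : ∀ M : MaximalSpectrum R, I ≤ M.asIdeal → ∃ β, B β ≤ M.asIdeal) :
    ∃ t : Finset ι, ∀ M : MaximalSpectrum R, I ≤ M.asIdeal → ∃ β ∈ t, B β ≤ M.asIdeal := by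
  classical
  by_cases hkey : ∃ s : Multiset ι, (s.map B).prod ≤ I.radical
  · obtain ⟨s, hs⟩ := hkey
    refine ⟨s.toFinset, fun M hM => ?_⟩
    have hrad : I.radical ≤ M.asIdeal := M.isMaximal.isPrime.radical_le_iff.mpr hM
    obtain ⟨β, hβs, hle⟩ := (M.isMaximal.isPrime.multiset_prod_map_le B).mp (hs.trans hrad)
    exact ⟨β, Multiset.mem_toFinset.mpr hβs, hle⟩
  · exfalso
    push_neg at hkey
    set Sig : Set (Ideal R) := {J | I.radical ≤ J ∧ ∀ s : Multiset ι, ¬ (s.map B).prod ≤ J}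
      with hSig
    have hIin : I.radical ∈ Sig := ⟨le_rfl, hkey⟩
    obtain ⟨P, hIP, hPmem, hPmax⟩ := zorn_le_nonempty₀ Sig (fun c hcS hchain y hyc =>
      ⟨sSup c, ⟨(hcS hyc).1.trans (le_sSup hyc), fun s hle => by
        obtain ⟨z, hzc, hzle⟩ := chain_le_of_fg hchain hyc (multiset_prod_fg B hB s) hle
        exact (hcS hzc).2 s hzle⟩, fun z hz => le_sSup hz⟩) I.radical hIin
    have hPne : P ≠ ⊤ := by
      intro h
      exact hPmem.2 0 (by simp [h])
    have hPprime : P.IsPrime := by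
      refine ⟨hPne, ?_⟩
      intro a b hab
      by_contra hcon
      push_neg at hcon
      obtain ⟨ha, hb⟩ := hcon
      have h1 : ∃ s : Multiset ι, (s.map B).prod ≤ P ⊔ Ideal.span {a} := by
        by_contra h
        push_neg at h
        have hmem : P ⊔ Ideal.span {a} ∈ Sig := ⟨hPmem.1.trans le_sup_left, h⟩
        have := hPmax hmem le_sup_left
        exact ha (this (le_sup_right (α := Ideal R)
          (Ideal.subset_span (Set.mem_singleton a))))
      have h2 : ∃ s : Multiset ι, (s.map B).prod ≤ P ⊔ Ideal.span {b} := by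
        by_contra h
        push_neg at h
        have hmem : P ⊔ Ideal.span {b} ∈ Sig := ⟨hPmem.1.trans le_sup_left, h⟩
        have := hPmax hmem le_sup_left
        exact hb (this (le_sup_right (α := Ideal R)
          (Ideal.subset_span (Set.mem_singleton b))))
      obtain ⟨s1, hs1⟩ := h1
      obtain ⟨s2, hs2⟩ := h2
      apply hPmem.2 (s1 + s2)
      rw [Multiset.map_add, Multiset.prod_add]
      calc (Multiset.map B s1).prod * (Multiset.map B s2).prod
          ≤ (P ⊔ Ideal.span {a}) * (P ⊔ Ideal.span {b}) := Ideal.mul_mono hs1 hs2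
        _ ≤ P := by
            rw [Ideal.mul_sup, Ideal.sup_mul, Ideal.sup_mul,
              Ideal.span_singleton_mul_span_singleton]
            refine sup_le (sup_le ?_ ?_) (sup_le ?_ ?_)
            · exact Ideal.mul_le_left
            · exact Ideal.mul_le_right
            · exact Ideal.mul_le_left
            · rw [Ideal.span_le, Set.singleton_subset_iff]
              exact hab
    have hP0 : P ≠ ⊥ := by
      intro h
      exact hI (le_bot_iff.mp (h ▸ Ideal.le_radical.trans hIP))
    have hPmaxI : P.IsMaximal := prime_nonzero_maximal hR hPprime hP0
    obtain ⟨β, hβ⟩ := hcov ⟨P, hPmaxI⟩ (Ideal.le_radical.trans hIP)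
    exact hPmem.2 {β} (by simpa using hβ)

end Stmt13Aux

namespace Stmt13Aux

variable {R : Type*} [CommRing R] [IsDomain R]

def invTop' (R : Type*) [CommRing R] : TopologicalSpace (MaximalSpectrum R) :=
  .generateFrom {s | ∃ I : Ideal R, I.FG ∧ s = {M | I ≤ M.asIdeal}}

omit [IsDomain R] in
lemma cont_iff_fibers (f : MaximalSpectrum R → ℤ) :
    @Continuous _ _ (invTop' R) ⊥ f ↔ ∀ n : ℤ, @IsOpen _ (invTop' R) (f ⁻¹' {n}) := by
  haveI : @DiscreteTopology ℤ ⊥ := discreteTopology_bot ℤ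
  constructor
  · intro hf n
    exact @Continuous.isOpen_preimage _ _ (invTop' R) ⊥ f hf _ (@isOpen_discrete _ ⊥ _ _)
  · intro h
    rw [@continuous_def _ _ (invTop' R) ⊥]
    intro s _
    have : f ⁻¹' s = ⋃ n ∈ s, f ⁻¹' {n} := by
      ext M; simp
    rw [this]
    exact @isOpen_biUnion _ _ (invTop' R) _ _ fun n _ => h n

omit [IsDomain R] in
lemma isOpen_basic {B : Ideal R} (hB : B.FG) :
    @IsOpen _ (invTop' R) {M : MaximalSpectrum R | B ≤ M.asIdeal} :=
  TopologicalSpace.isOpen_generateFrom_of_mem ⟨B, hB, rfl⟩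

omit [IsDomain R] in
lemma exists_basic_subset {U : Set (MaximalSpectrum R)} (hU : @IsOpen _ (invTop' R) U)
    {M : MaximalSpectrum R} (hM : M ∈ U) :
    ∃ B : Ideal R, B.FG ∧ B ≤ M.asIdeal ∧ {N : MaximalSpectrum R | B ≤ N.asIdeal} ⊆ U := by
  classical
  have hbasis := TopologicalSpace.isTopologicalBasis_of_subbasis (t := invTop' R)
    (s := {s | ∃ I : Ideal R, I.FG ∧ s = {M : MaximalSpectrum R | I ≤ M.asIdeal}}) rfl
  obtain ⟨v, hv, hMv, hvU⟩ := @TopologicalSpace.IsTopologicalBasis.exists_subset_of_mem_open _ (invTop' R) _ hbasis _ _ hM hU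
  obtain ⟨f, ⟨hffin, hfsub⟩, rfl⟩ := hv
  choose C hCfg hCeq using fun (t : f) => hfsub t.2
  haveI := hffin.to_subtype
  haveI : Fintype f := Fintype.ofFinite f
  set B : Ideal R := (Finset.univ : Finset f).sup C with hB
  have hBfg : B.FG := Submodule.fg_finset_sup _ _ fun i _ => hCfg i
  have hmem : ∀ N : MaximalSpectrum R, B ≤ N.asIdeal ↔ N ∈ ⋂₀ f := by
    intro N
    rw [hB, Finset.sup_le_iff]
    constructor
    · intro h t ht
      exact (Set.ext_iff.mp (hCeq ⟨t, ht⟩) N).mpr (h ⟨t, ht⟩ (Finset.mem_univ _))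
    · intro h t _
      exact (Set.ext_iff.mp (hCeq t) N).mp (h t t.2)
  refine ⟨B, hBfg, (hmem M).mpr hMv, fun N hN => hvU ((hmem N).mp hN)⟩

lemma isCompact_V
    (hR : ∀ M : MaximalSpectrum R, IsDiscreteValuationRing (Localization.AtPrime M.asIdeal))
    {I : Ideal R} (hI : I ≠ ⊥) :
    @IsCompact _ (invTop' R) {M : MaximalSpectrum R | I ≤ M.asIdeal} := by
  classical
  apply @isCompact_of_finite_subcover _ (invTop' R)
  intro ι U hUopen hcover
  have hch : ∀ M : {M : MaximalSpectrum R | I ≤ M.asIdeal}, ∃ (B : Ideal R) (i : ι),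
      B.FG ∧ B ≤ (M : MaximalSpectrum R).asIdeal ∧
      {N : MaximalSpectrum R | B ≤ N.asIdeal} ⊆ U i := by
    rintro ⟨M, hM⟩
    obtain ⟨i, hi⟩ := Set.mem_iUnion.mp (hcover hM)
    obtain ⟨B, h1, h2, h3⟩ := exists_basic_subset (hUopen i) hi
    exact ⟨B, i, h1, h2, h3⟩
  choose B idx hBfg hBle hBsub using hch
  obtain ⟨t, ht⟩ := exists_finite_subcover hR hI B hBfg
    (fun M hM => ⟨⟨M, hM⟩, hBle ⟨M, hM⟩⟩)
  refine ⟨t.image idx, fun M hM => ?_⟩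
  obtain ⟨β, hβt, hβle⟩ := ht M hM
  exact Set.mem_iUnion₂.mpr ⟨idx β, Finset.mem_image_of_mem idx hβt, hBsub β hβle⟩

lemma compact_open_eq_basic {S : Set (MaximalSpectrum R)}
    (hSc : @IsCompact _ (invTop' R) S) (hSo : @IsOpen _ (invTop' R) S) :
    ∃ B : Ideal R, B.FG ∧ S = {M : MaximalSpectrum R | B ≤ M.asIdeal} := by
  classical
  have hch : ∀ M : S, ∃ B : Ideal R, B.FG ∧ B ≤ (M : MaximalSpectrum R).asIdeal ∧
      {N : MaximalSpectrum R | B ≤ N.asIdeal} ⊆ S :=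
    fun M => exists_basic_subset hSo M.2
  choose B hBfg hBle hBsub using hch
  obtain ⟨t, ht⟩ := @IsCompact.elim_finite_subcover _ (invTop' R) _ _ hSc
    (fun M : S => {N : MaximalSpectrum R | B M ≤ N.asIdeal})
    (fun M => isOpen_basic (hBfg M)) (fun M hM => Set.mem_iUnion.mpr ⟨⟨M, hM⟩, hBle ⟨M, hM⟩⟩)
  refine ⟨t.prod B, ?_, ?_⟩
  · exact Finset.prod_induction B Submodule.FG
      (fun _ _ => Submodule.FG.mul) (by rw [Ideal.one_eq_top]; exact top_fg) (fun β _ => hBfg β)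
  · ext M
    constructor
    · intro hM
      obtain ⟨β, hβt, hβ⟩ := Set.mem_iUnion₂.mp (ht hM)
      exact le_trans (le_trans Ideal.prod_le_inf (Finset.inf_le hβt)) hβ
    · intro hM
      obtain ⟨β, _, hβ⟩ := (M.isMaximal.isPrime.prod_le).mp hM
      exact hBsub β hβ

end Stmt13Aux

/-- Let `R` be an almost Dedekind domain and, for every nonzero ideal `J`, let
`ν J M` be the exponent with `J R_M = (M R_M)^(ν J M)` (the greatest `n` with
`J ⊆ M^n`).  Then for a nonzero integral ideal `I`, the map `ν I` is continuous
(inverse topology on `Max(R)`, discrete `ℤ`) iff `I` is a product `J₁ ⋯ J_k` of an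
increasing chain `J₁ ⊆ ⋯ ⊆ J_k` of radical ideals with each `ν (J i)` continuous,
iff `I` is a finite product of radical ideals with continuous associated maps. -/
theorem stmt13 {R : Type*} [CommRing R] [IsDomain R] (hR : AlmostDedekind R)
    (ν : Ideal R → MaximalSpectrum R → ℤ)
    (hν : ∀ J : Ideal R, J ≠ ⊥ → ∀ M : MaximalSpectrum R,
      0 ≤ ν J M ∧ J ≤ M.asIdeal ^ (ν J M).toNat ∧
      ¬ J ≤ M.asIdeal ^ ((ν J M).toNat + 1))
    (I : Ideal R) (hI : I ≠ ⊥) :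
    (@Continuous _ _ (invTop R) ⊥ (ν I) ↔
      ∃ (k : ℕ) (J : Fin k → Ideal R), Monotone J ∧
        (∀ i, (J i).IsRadical ∧ @Continuous _ _ (invTop R) ⊥ (ν (J i))) ∧
        I = ∏ i, J i) ∧
    (@Continuous _ _ (invTop R) ⊥ (ν I) ↔
      ∃ (k : ℕ) (J : Fin k → Ideal R),
        (∀ i, (J i).IsRadical ∧ @Continuous _ _ (invTop R) ⊥ (ν (J i))) ∧
        I = ∏ i, J i) := by
  classical
  have hR' : ∀ M : MaximalSpectrum R, IsDiscreteValuationRing (Localization.AtPrime M.asIdeal) := hR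
  have hinv : invTop R = Stmt13Aux.invTop' R := rfl
  have htop : (⊤ : Ideal R) ≠ ⊥ := by
    intro h
    have h1 : (1 : R) ∈ (⊤ : Ideal R) := trivial
    rw [h] at h1
    exact one_ne_zero (Ideal.mem_bot.mp h1)
  -- uniqueness of the exponent
  have hexp : ∀ {J : Ideal R} {M : MaximalSpectrum R} {n : ℕ}, J ≠ ⊥ →
      J ≤ M.asIdeal ^ n → ¬ J ≤ M.asIdeal ^ (n + 1) → ν J M = n := by
    intro J M n hJ h1 h2
    obtain ⟨hpos, ha1, ha2⟩ := hν J hJ M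
    have := Stmt13Aux.exp_unique ha1 ha2 h1 h2
    omega
  -- ν I M = 0 outside V(I), and I ≤ M if ν I M ≥ 1
  have hout : ∀ {J : Ideal R}, J ≠ ⊥ → ∀ M : MaximalSpectrum R,
      ¬ J ≤ M.asIdeal → ν J M = 0 := by
    intro J hJ M hM
    refine hexp (n := 0) hJ (by simp) ?_
    intro h
    rw [zero_add, pow_one] at h
    exact hM h
  have hin : ∀ {J : Ideal R}, J ≠ ⊥ → ∀ M : MaximalSpectrum R,
      1 ≤ ν J M → J ≤ M.asIdeal := by
    intro J hJ M h1
    obtain ⟨hpos, ha1, _⟩ := hν J hJ M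
    exact ha1.trans (Ideal.pow_le_self (by omega))
  -- additivity of ν on products of nonzero ideals
  have hnu_mul : ∀ J K : Ideal R, J ≠ ⊥ → K ≠ ⊥ → ∀ M : MaximalSpectrum R,
      ν (J * K) M = ν J M + ν K M := by
    intro J K hJ hK M
    have hJK : J * K ≠ ⊥ := by
      rw [Ne, Ideal.mul_eq_bot]
      tauto
    obtain ⟨hJ0, hJ1, hJ2⟩ := hν J hJ M
    obtain ⟨hK0, hK1, hK2⟩ := hν K hK M
    obtain ⟨hm1, hm2⟩ := Stmt13Aux.exp_mul hR' hJ hK hJ1 hJ2 hK1 hK2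
    have := hexp hJK hm1 hm2
    omega
  -- ν of finite products
  have hnu_prod : ∀ (k : ℕ) (J : Fin k → Ideal R) (s : Finset (Fin k)), (∀ i, J i ≠ ⊥) →
      (∏ i ∈ s, J i) ≠ ⊥ ∧ ∀ M, ν (∏ i ∈ s, J i) M = ∑ i ∈ s, ν (J i) M := by
    intro k J s hJ
    induction s using Finset.induction with
    | empty =>
        refine ⟨by simpa using htop, fun M => ?_⟩
        rw [Finset.prod_empty, Finset.sum_empty]
        have : (1 : Ideal R) = ⊤ := Ideal.one_eq_top
        rw [this]
        refine hexp (n := 0) htop (by simp) ?_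
        intro h
        rw [zero_add, pow_one] at h
        exact M.isMaximal.ne_top (top_le_iff.mp h)
    | @insert a s ha ih =>
        obtain ⟨hne, hval⟩ := ih
        have hprodne : (∏ i ∈ insert a s, J i) ≠ ⊥ := by
          rw [Finset.prod_insert ha, Ne, Ideal.mul_eq_bot]
          push_neg
          exact ⟨hJ a, hne⟩
        refine ⟨hprodne, fun M => ?_⟩
        rw [Finset.prod_insert ha, Finset.sum_insert ha, hnu_mul _ _ (hJ a) hne, hval]
  -- preimages of arbitrary sets are open, given continuity
  have hopen_pre : ∀ f : MaximalSpectrum R → ℤ, @Continuous _ _ (invTop R) ⊥ f →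
      ∀ A : Set ℤ, @IsOpen _ (Stmt13Aux.invTop' R) (f ⁻¹' A) := by
    intro f hf A
    have hfib := (Stmt13Aux.cont_iff_fibers f).mp (hinv ▸ hf)
    have : f ⁻¹' A = ⋃ n ∈ A, f ⁻¹' {n} := by ext; simp
    rw [this]
    exact @isOpen_biUnion _ _ (Stmt13Aux.invTop' R) _ _ fun n _ => hfib n
  -- Part B : a decomposition implies continuity
  have partB : ∀ (k : ℕ) (J : Fin k → Ideal R),
      (∀ i, (J i).IsRadical ∧ @Continuous _ _ (invTop R) ⊥ (ν (J i))) → I = ∏ i, J i →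
      @Continuous _ _ (invTop R) ⊥ (ν I) := by
    intro k J hJ hIeq
    have hJne : ∀ i, J i ≠ ⊥ := by
      intro i hbot
      apply hI
      rw [hIeq]
      exact le_bot_iff.mp (hbot ▸ (Ideal.prod_le_inf.trans (Finset.inf_le (Finset.mem_univ i))))
    obtain ⟨hprodne, hsum⟩ := hnu_prod k J Finset.univ hJne
    rw [hinv, Stmt13Aux.cont_iff_fibers]
    intro n
    have hset : (ν I) ⁻¹' {n} =
        ⋃ (c : {c : Fin k → ℤ // ∑ i, c i = n}),
          ⋂ i, (ν (J i)) ⁻¹' {(c : Fin k → ℤ) i} := by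
      ext M
      simp only [Set.mem_preimage, Set.mem_singleton_iff, Set.mem_iUnion, Set.mem_iInter]
      constructor
      · intro hM
        exact ⟨⟨fun i => ν (J i) M, by rw [← hsum M, ← hIeq, hM]⟩, fun i => rfl⟩
      · rintro ⟨⟨c, hc⟩, hMc⟩
        simp only at hMc
        rw [hIeq, hsum M, Finset.sum_congr rfl fun i _ => hMc i, hc]
    rw [hset]
    refine @isOpen_iUnion _ _ (Stmt13Aux.invTop' R) _ ?_
    intro c
    refine @isOpen_iInter_of_finite _ _ (Stmt13Aux.invTop' R) _ _ ?_
    intro i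
    exact (Stmt13Aux.cont_iff_fibers _).mp (hinv ▸ (hJ i).2) _
  -- Part A : continuity implies the monotone decomposition
  have partA : @Continuous _ _ (invTop R) ⊥ (ν I) →
      ∃ (k : ℕ) (J : Fin k → Ideal R), Monotone J ∧
        (∀ i, (J i).IsRadical ∧ @Continuous _ _ (invTop R) ⊥ (ν (J i))) ∧
        I = ∏ i, J i := by
    intro hc
    have hfib := (Stmt13Aux.cont_iff_fibers (ν I)).mp (hinv ▸ hc)
    have hopen := hopen_pre (ν I) hc
    have hK := Stmt13Aux.isCompact_V hR' hI
    -- a uniform bound on ν I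
    obtain ⟨T, hT⟩ := @IsCompact.elim_finite_subcover _ (Stmt13Aux.invTop' R) _ ℤ hK
      (fun n => (ν I) ⁻¹' {n}) (fun n => hfib n)
      (fun M _ => Set.mem_iUnion.mpr ⟨ν I M, rfl⟩)
    set k : ℕ := T.sup Int.toNat with hk
    have hbound : ∀ M, (ν I M).toNat ≤ k := by
      intro M
      by_cases hM : I ≤ M.asIdeal
      · obtain ⟨n, hnT, hn⟩ := Set.mem_iUnion₂.mp (hT hM)
        have hn' : ν I M = n := hn
        have : (ν I M).toNat ≤ n.toNat := by omega
        exact this.trans (Finset.le_sup hnT)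
      · rw [hout hI M hM]
        omega
    -- each level set is a basic open set
    have hSt : ∀ t : ℕ, 1 ≤ t → ∃ B : Ideal R, B.FG ∧
        {M : MaximalSpectrum R | (t : ℤ) ≤ ν I M} = {M | B ≤ M.asIdeal} := by
      intro t ht
      apply Stmt13Aux.compact_open_eq_basic
      · have hclosed : @IsClosed _ (Stmt13Aux.invTop' R)
            {M : MaximalSpectrum R | (t : ℤ) ≤ ν I M} := by
          rw [← @isOpen_compl_iff _ _ (Stmt13Aux.invTop' R)]
          have : {M : MaximalSpectrum R | (t : ℤ) ≤ ν I M}ᶜ = (ν I) ⁻¹' {n | n < (t : ℤ)} := by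
            ext M
            simp [not_le]
          rw [this]
          exact hopen _
        have hsub : {M : MaximalSpectrum R | (t : ℤ) ≤ ν I M} ⊆ {M | I ≤ M.asIdeal} := by
          intro M hM
          exact hin hI M (le_trans (by exact_mod_cast ht) hM)
        have := @IsCompact.inter_right _ (Stmt13Aux.invTop' R) _ _ hK hclosed
        rwa [Set.inter_eq_self_of_subset_right hsub] at this
      · exact hopen {n | (t : ℤ) ≤ n}
    choose Bf hBfg hBeq using fun i : Fin k => hSt (i.val + 1) (by omega)
    set J : Fin k → Ideal R := fun i =>
      ⨅ (M : MaximalSpectrum R) (_ : ((i.val + 1 : ℕ) : ℤ) ≤ ν I M), M.asIdeal with hJ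
    have hJle : ∀ (i : Fin k) (M : MaximalSpectrum R),
        J i ≤ M.asIdeal ↔ ((i.val + 1 : ℕ) : ℤ) ≤ ν I M := by
      intro i M
      constructor
      · intro h
        have hB : Bf i ≤ J i := by
          refine le_iInf fun N => le_iInf fun hN => ?_
          have : N ∈ {M : MaximalSpectrum R | ((i.val + 1 : ℕ) : ℤ) ≤ ν I M} := hN
          rw [hBeq i] at this
          exact this
        have : M ∈ {M : MaximalSpectrum R | Bf i ≤ M.asIdeal} := hB.trans h
        rw [← hBeq i] at this
        exact this
      · intro h
        exact iInf_le_of_le M (iInf_le _ h)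
    have hJI : ∀ i, I ≤ J i := by
      intro i
      refine le_iInf fun M => le_iInf fun hM => ?_
      exact hin hI M (le_trans (by exact_mod_cast Nat.one_le_iff_ne_zero.mpr (by omega)) hM)
    have hJne : ∀ i, J i ≠ ⊥ := fun i h => hI (le_bot_iff.mp (h ▸ hJI i))
    have hJrad : ∀ i, (J i).IsRadical := fun i =>
      Ideal.isRadical_iInf _ fun M => Ideal.isRadical_iInf _ fun _ =>
        M.isMaximal.isPrime.isRadical
    have hJval : ∀ (i : Fin k) (M : MaximalSpectrum R),
        ν (J i) M = if ((i.val + 1 : ℕ) : ℤ) ≤ ν I M then 1 else 0 := by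
      intro i M
      by_cases hM : ((i.val + 1 : ℕ) : ℤ) ≤ ν I M
      · rw [if_pos hM]
        refine hexp (n := 1) (hJne i) (by rw [pow_one]; exact (hJle i M).mpr hM) ?_
        exact Stmt13Aux.exp_of_radical hR' (hJne i) (hJrad i)
      · rw [if_neg hM]
        refine hexp (n := 0) (hJne i) (by simp) ?_
        intro h
        rw [zero_add, pow_one] at h
        exact hM ((hJle i M).mp h)
    have hmono : Monotone J := by
      intro i j hij
      refine le_iInf fun M => le_iInf fun hM => ?_
      refine iInf_le_of_le M (iInf_le_of_le ?_ le_rfl)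
      have : i.val ≤ j.val := hij
      omega
    have hcont : ∀ i, @Continuous _ _ (invTop R) ⊥ (ν (J i)) := by
      intro i
      rw [hinv, Stmt13Aux.cont_iff_fibers]
      intro n
      rcases eq_or_ne n 1 with rfl | h1
      · have : (ν (J i)) ⁻¹' {1} = {M : MaximalSpectrum R | Bf i ≤ M.asIdeal} := by
          rw [← hBeq i]
          ext M
          simp only [Set.mem_preimage, Set.mem_singleton_iff, Set.mem_setOf_eq, hJval i M]
          split_ifs with h <;> constructor <;> intro h2 <;> omega
        rw [this]
        exact Stmt13Aux.isOpen_basic (hBfg i)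
      rcases eq_or_ne n 0 with rfl | h0
      · have : (ν (J i)) ⁻¹' {0} = (ν I) ⁻¹' {m | m < ((i.val + 1 : ℕ) : ℤ)} := by
          ext M
          simp only [Set.mem_preimage, Set.mem_singleton_iff, Set.mem_setOf_eq, hJval i M]
          split_ifs with h <;> constructor <;> intro h2 <;> omega
        rw [this]
        exact hopen _
      · have : (ν (J i)) ⁻¹' {n} = ∅ := by
          ext M
          simp only [Set.mem_preimage, Set.mem_singleton_iff, Set.mem_empty_iff_false,
            iff_false, hJval i M]
          split_ifs with h <;> omega
        rw [this]
        exact @isOpen_empty _ (Stmt13Aux.invTop' R)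
    -- the product decomposition
    have hprod : I = ∏ i, J i := by
      obtain ⟨hPne, hPsum⟩ := hnu_prod k J Finset.univ hJne
      have hνeq : ∀ M, ν (∏ i, J i) M = ν I M := by
        intro M
        rw [hPsum M, Finset.sum_congr rfl fun i _ => hJval i M]
        set n : ℕ := (ν I M).toNat with hn
        have hnk : n ≤ k := hbound M
        have hnν : ν I M = (n : ℤ) := by
          have := (hν I hI M).1
          omega
        have hcond : ∀ i : Fin k,
            (if ((i.val + 1 : ℕ) : ℤ) ≤ ν I M then (1 : ℤ) else 0) =
            if i.val < n then 1 else 0 := by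
          intro i
          by_cases h : ((i.val + 1 : ℕ) : ℤ) ≤ ν I M
          · rw [if_pos h, if_pos (by rw [hnν] at h; exact_mod_cast by omega)]
          · rw [if_neg h, if_neg]
            intro hlt
            apply h
            rw [hnν]
            exact_mod_cast by omega
        rw [Finset.sum_congr rfl fun i _ => hcond i, hnν]
        rw [Fin.sum_univ_eq_sum_range (fun j => if j < n then (1 : ℤ) else 0) k]
        have hfilter : (Finset.range k).filter (fun j => j < n) = Finset.range n := by
          ext j
          simp only [Finset.mem_filter, Finset.mem_range]
          omega
        rw [Finset.sum_ite, Finset.sum_const_zero, add_zero, hfilter, Finset.sum_const,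
          Finset.card_range, nsmul_eq_mul, mul_one]
      apply le_antisymm
      · apply Stmt13Aux.le_of_map_le_map
        intro M
        obtain ⟨_, hI1, hI2⟩ := hν I hI M
        obtain ⟨_, hP1, hP2⟩ := hν (∏ i, J i) hPne M
        rw [Stmt13Aux.map_eq_pow_exp hR' hI hI1 hI2,
          Stmt13Aux.map_eq_pow_exp hR' hPne hP1 hP2, hνeq M]
      · apply Stmt13Aux.le_of_map_le_map
        intro M
        obtain ⟨_, hI1, hI2⟩ := hν I hI M
        obtain ⟨_, hP1, hP2⟩ := hν (∏ i, J i) hPne M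
        rw [Stmt13Aux.map_eq_pow_exp hR' hI hI1 hI2,
          Stmt13Aux.map_eq_pow_exp hR' hPne hP1 hP2, hνeq M]
    exact ⟨k, J, hmono, fun i => ⟨hJrad i, hcont i⟩, hprod⟩
  refine ⟨⟨partA, fun ⟨k, J, _, h2, h3⟩ => partB k J h2 h3⟩,
    ⟨fun h => ?_, fun ⟨k, J, h2, h3⟩ => partB k J h2 h3⟩⟩
  obtain ⟨k, J, _, h2, h3⟩ := partA h
  exact ⟨k, J, h2, h3⟩
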